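/- Let G₁, G₂ be graphs on a common vertex set such that G₁ ∩ G₂ is Δ-regular and Δ(G₁), Δ(G₂) ≤ Δ. Then χ'(G₁, G₂) ≤ Δ + 2. -/

import Mathlib

set_option linter.unusedSectionVars false

namespace Viz
open SimpleGraph



variable {V : Type*}

/-- proper on a graph -/
def Proper {n : ℕ} (H : SimpleGraph V) (c : Sym2 V → Fin n) : Prop :=
  ∀ e ∈ H.edgeSet, ∀ f ∈ H.edgeSet, e ≠ f → (∃ v, v ∈ e ∧ v ∈ f) → c e ≠ c f

def Missing {n : ℕ} (H : SimpleGraph V) (c : Sym2 V → Fin n) (x : V) (t : Fin n) : Prop :=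
  ∀ e ∈ H.edgeSet, x ∈ e → c e ≠ t

lemma edge_rep {H : SimpleGraph V} {e : Sym2 V} (he : e ∈ H.edgeSet) {x : V} (hx : x ∈ e) :
    ∃ w, H.Adj x w ∧ e = s(x, w) := by
  induction e using Sym2.ind with
  | _ p q =>
    rw [SimpleGraph.mem_edgeSet] at he
    rcases Sym2.mem_iff.mp hx with rfl | rfl
    · exact ⟨q, he, rfl⟩
    · exact ⟨p, he.symm, Sym2.eq_swap⟩

lemma exists_missing [Fintype V] [DecidableEq V] {n Δ : ℕ} (hn : Δ < n)
    {H G : SimpleGraph V} (hHG : H ≤ G) [DecidableRel G.Adj]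
    (hdeg : ∀ x, G.degree x ≤ Δ) (c : Sym2 V → Fin n) (x : V) :
    ∃ t, Missing H c x t := by
  classical
  set A : Finset (Fin n) := (G.neighborFinset x).image (fun w => c s(x, w)) with hA
  have hcard : A.card < Fintype.card (Fin n) := by
    calc A.card ≤ (G.neighborFinset x).card := Finset.card_image_le
    _ = G.degree x := rfl
    _ ≤ Δ := hdeg x
    _ < n := hn
    _ = Fintype.card (Fin n) := (Fintype.card_fin n).symm
  have hne : (Aᶜ : Finset (Fin n)).Nonempty := by
    rw [← Finset.card_pos, Finset.card_compl]
    omega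
  obtain ⟨t, ht⟩ := hne
  rw [Finset.mem_compl] at ht
  refine ⟨t, fun e he hx hc => ht ?_⟩
  obtain ⟨w, hadj, rfl⟩ := edge_rep he hx
  exact Finset.mem_image.mpr ⟨w, (G.mem_neighborFinset x w).mpr (hHG hadj), hc⟩

section Swap

variable {n : ℕ} (H : SimpleGraph V) (c : Sym2 V → Fin n) (a b : Fin n) (u : V)

/-- the (a,b)-coloured subgraph -/
def Dg : SimpleGraph V where
  Adj x y := H.Adj x y ∧ (c s(x, y) = a ∨ c s(x, y) = b)
  symm := by
    constructor
    intro x y ⟨h1, h2⟩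
    exact ⟨h1.symm, by rwa [Sym2.eq_swap]⟩
  loopless := ⟨fun x h => H.irrefl h.1⟩

variable {H c a b u}

lemma Dg_le : Dg H c a b ≤ H := fun _ _ h => h.1

lemma Dg_edge_mem {e : Sym2 V} (he : e ∈ (Dg H c a b).edgeSet) :
    e ∈ H.edgeSet ∧ (c e = a ∨ c e = b) := by
  induction e using Sym2.ind with
  | _ p q => exact ⟨(SimpleGraph.mem_edgeSet H).mpr he.1, he.2⟩

lemma Dg_edge_of {e : Sym2 V} (he : e ∈ H.edgeSet) (hc : c e = a ∨ c e = b) :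
    e ∈ (Dg H c a b).edgeSet := by
  induction e using Sym2.ind with
  | _ p q => exact ⟨(SimpleGraph.mem_edgeSet H).mp he, hc⟩

lemma Dg_reach_all {e : Sym2 V} (he : e ∈ (Dg H c a b).edgeSet)
    {x y : V} (hx : x ∈ e) (hy : y ∈ e) (hr : (Dg H c a b).Reachable u x) :
    (Dg H c a b).Reachable u y := by
  induction e using Sym2.ind with
  | _ p q =>
    have hadj : (Dg H c a b).Adj p q := he
    rcases Sym2.mem_iff.mp hx with rfl | rfl <;> rcases Sym2.mem_iff.mp hy with rfl | rfl
    · exact hr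
    · exact hr.trans hadj.reachable
    · exact hr.trans hadj.symm.reachable
    · exact hr

/-- membership in the Kempe chain of `u` (as an edge set) -/
def inK (e : Sym2 V) : Prop :=
  e ∈ (Dg H c a b).edgeSet ∧ ∃ x ∈ e, (Dg H c a b).Reachable u x

open Classical in
noncomputable def swapc : Sym2 V → Fin n :=
  fun e => if @inK V n H c a b u e then (if c e = a then b else a) else c e

lemma inK_reach {e : Sym2 V} (he : @inK V n H c a b u e) {x : V} (hx : x ∈ e) :
    (Dg H c a b).Reachable u x := by
  obtain ⟨hD, y, hy, hr⟩ := he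
  exact Dg_reach_all hD hy hx hr

lemma swapc_eq_of_not_reach {x : V} (hx : ¬ (Dg H c a b).Reachable u x)
    {e : Sym2 V} (hex : x ∈ e) : @swapc V n H c a b u e = c e := by
  rw [swapc, if_neg]
  intro hK
  exact hx (inK_reach hK hex)

variable (hab : a ≠ b) (hprop : Proper H c) (hu : Missing H c u a)

include hab hprop in
lemma swap_proper : Proper H (@swapc V n H c a b u) := by
  intro e he f hf hne hshare
  obtain ⟨x, hxe, hxf⟩ := hshare
  by_cases hKe : @inK V n H c a b u e <;> by_cases hKf : @inK V n H c a b u f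
  · -- both swapped
    rw [swapc, if_pos hKe, swapc, if_pos hKf]
    have hce := (Dg_edge_mem hKe.1).2
    have hcf := (Dg_edge_mem hKf.1).2
    have hprop' := hprop e he f hf hne ⟨x, hxe, hxf⟩
    rcases hce with h1 | h1 <;> rcases hcf with h2 | h2 <;>
      simp_all [hab, Ne.symm hab]
  · -- e swapped, f not
    rw [swapc, if_pos hKe, swapc, if_neg hKf]
    intro heq
    apply hKf
    have hce := (Dg_edge_mem hKe.1).2
    have hcf : c f = a ∨ c f = b := by
      rcases hce with h1 | h1 <;> simp [h1] at heq <;> simp [heq.symm, hab]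
    refine ⟨Dg_edge_of hf hcf, x, hxf, inK_reach hKe hxe⟩
  · -- f swapped, e not
    rw [swapc, if_neg hKe, swapc, if_pos hKf]
    intro heq
    apply hKe
    have hcf := (Dg_edge_mem hKf.1).2
    have hce : c e = a ∨ c e = b := by
      rcases hcf with h1 | h1 <;> simp [h1] at heq <;> simp [heq, hab]
    refine ⟨Dg_edge_of he hce, x, hxe, inK_reach hKf hxf⟩
  · rw [swapc, if_neg hKe, swapc, if_neg hKf]
    exact hprop e he f hf hne ⟨x, hxe, hxf⟩

include hab hprop hu in
lemma swap_missing_u : Missing H (@swapc V n H c a b u) u b := by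
  intro e he hue
  by_cases hKe : @inK V n H c a b u e
  · rw [swapc, if_pos hKe]
    have hce := (Dg_edge_mem hKe.1).2
    have hca : c e ≠ a := hu e he hue
    rcases hce with h1 | h1
    · exact absurd h1 hca
    · rw [if_neg hca]; exact hab
  · rw [swapc, if_neg hKe]
    intro hcb
    exact hKe ⟨Dg_edge_of he (Or.inr hcb), u, hue, SimpleGraph.Reachable.refl u⟩

lemma swap_missing_far {x : V} (hx : ¬ (Dg H c a b).Reachable u x) {t : Fin n}
    (hm : Missing H c x t) : Missing H (@swapc V n H c a b u) x t := by
  intro e he hxe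
  rw [swapc_eq_of_not_reach hx hxe]
  exact hm e he hxe

end Swap


variable (D : SimpleGraph V)

/-- "max degree ≤ 2" in choice-free form -/
def Deg2 : Prop :=
  ∀ z w₁ w₂ w₃, D.Adj z w₁ → D.Adj z w₂ → D.Adj z w₃ → w₁ = w₂ ∨ w₁ = w₃ ∨ w₂ = w₃

/-- "degree ≤ 1 at z" -/
def Deg1 (z : V) : Prop := ∀ w₁ w₂, D.Adj z w₁ → D.Adj z w₂ → w₁ = w₂

variable {D}

lemma det (hdeg : Deg2 D) {aa x : V} (p : D.Walk aa x) :
    ∀ {y : V} (q : D.Walk aa y) (prev : V), p.IsPath → q.IsPath →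
      p.length ≤ q.length →
      (∀ w₁ w₂, D.Adj aa w₁ → D.Adj aa w₂ → w₁ ≠ prev → w₂ ≠ prev → w₁ = w₂) →
      prev ∉ p.support.tail → prev ∉ q.support.tail → x ∈ q.support := by
  induction p with
  | nil => intro y q prev _ _ _ _ _ _; exact q.start_mem_support
  | @cons u' v' w' h p ih =>
    intro y q prev hp hq hlen hC hpp hqp
    cases q with
    | nil => simp at hlen
    | @cons _ b' _ h' q' =>
      rw [SimpleGraph.Walk.support_cons] at hpp hqp
      have hv' : v' ≠ prev := fun hh => hpp (hh ▸ p.start_mem_support)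
      have hb' : b' ≠ prev := fun hh => hqp (hh ▸ q'.start_mem_support)
      have hbv : v' = b' := hC v' b' h h' hv' hb'
      subst hbv
      rw [SimpleGraph.Walk.support_cons]
      refine List.mem_cons_of_mem _ ?_
      refine ih q' u' hp.of_cons hq.of_cons (by simpa using hlen) ?_ ?_ ?_
      · intro w₁ w₂ h1 h2 hn1 hn2
        rcases hdeg v' u' w₁ w₂ h.symm h1 h2 with hh | hh | hh
        · exact absurd hh.symm hn1
        · exact absurd hh.symm hn2
        · exact hh
      · have := (SimpleGraph.Walk.cons_isPath_iff h p).mp hp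
        exact fun hh => this.2 (List.mem_of_mem_tail hh)
      · have := (SimpleGraph.Walk.cons_isPath_iff h' q').mp hq
        exact fun hh => this.2 (List.mem_of_mem_tail hh)

lemma internal_two {s t x : V} (q : D.Walk s t) (hq : q.IsPath) (hx : x ∈ q.support)
    (hxs : x ≠ s) (hxt : x ≠ t) :
    ∃ w₁ w₂, w₁ ≠ w₂ ∧ D.Adj x w₁ ∧ D.Adj x w₂ := by
  induction q with
  | nil => simp at hx; exact absurd hx hxs
  | @cons u' v' w' h q' ih =>
    rw [SimpleGraph.Walk.support_cons] at hx
    rcases List.mem_cons.mp hx with rfl | hx'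
    · exact absurd rfl hxs
    by_cases hxb : x = v'
    · subst hxb
      cases q' with
      | nil => exact absurd rfl hxt
      | @cons _ d _ h2 q'' =>
        refine ⟨u', d, ?_, h.symm, h2⟩
        have hq2 := (SimpleGraph.Walk.cons_isPath_iff h _).mp hq
        intro hh
        apply hq2.2
        rw [hh, SimpleGraph.Walk.support_cons]
        exact List.mem_cons_of_mem _ q''.start_mem_support
    · exact ih hq.of_cons hx' hxb hxt

lemma unique_pendant (hdeg : Deg2 D) {u x y : V}
    (hu : Deg1 D u) (hx1 : Deg1 D x) (hy1 : Deg1 D y)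
    (hxu : x ≠ u) (hyu : y ≠ u)
    (hrx : D.Reachable u x) (hry : D.Reachable u y) : x = y := by
  classical
  have key : ∀ {x' y' : V}, Deg1 D x' → x' ≠ u → y' ≠ u →
      ∀ (p : D.Walk u x') (q : D.Walk u y'), p.IsPath → q.IsPath →
      p.length ≤ q.length → x' = y' := by
    intro x' y' hx1' hxu' hyu' p q hp hq hlen
    have hxq : x' ∈ q.support := by
      refine det hdeg p q u hp hq hlen ?_ ?_ ?_
      · intro w₁ w₂ h1 h2 _ _; exact hu w₁ w₂ h1 h2
      · have := SimpleGraph.Walk.support_eq_cons p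
        have hnd := hp.support_nodup
        rw [this] at hnd
        exact (List.nodup_cons.mp hnd).1
      · have := SimpleGraph.Walk.support_eq_cons q
        have hnd := hq.support_nodup
        rw [this] at hnd
        exact (List.nodup_cons.mp hnd).1
    by_contra hne
    obtain ⟨w₁, w₂, hw, h1, h2⟩ := internal_two q hq hxq hxu' hne
    exact hw (hx1' w₁ w₂ h1 h2)
  obtain ⟨p0⟩ := hrx
  obtain ⟨q0⟩ := hry
  set p := p0.toPath with hpdef
  set q := q0.toPath with hqdef
  rcases le_total (p : D.Walk u x).length (q : D.Walk u y).length with hle | hle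
  · exact key hx1 hxu hyu p q p.2 q.2 hle
  · exact (key hy1 hyu hxu q p q.2 p.2 hle).symm


section Fan

variable {n : ℕ} {G : SimpleGraph V} {u v : V} {c : Sym2 V → Fin n} {m : ℕ} {f : ℕ → V}

/-- not-u membership -/
lemma not_mem_edge {x y : V} (hu : u ≠ x ∧ u ≠ y) : u ∉ s(x,y) := by
  rw [Sym2.mem_iff]; push_neg; exact hu

lemma H0_edge_iff {e : Sym2 V} {s : Sym2 V} :
    e ∈ (G.deleteEdges {s}).edgeSet ↔ e ∈ G.edgeSet ∧ e ≠ s := by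
  rw [SimpleGraph.edgeSet_deleteEdges]; simp [Set.mem_diff]

/-- fan data -/
structure IsFan (G : SimpleGraph V) (u v : V) (c : Sym2 V → Fin n) (m : ℕ) (f : ℕ → V) : Prop where
  hv : f 0 = v
  hadj : ∀ i ≤ m, G.Adj u (f i)
  hinj : ∀ i ≤ m, ∀ j ≤ m, f i = f j → i = j
  hfree : ∀ i < m, Missing (G.deleteEdges {s(u,v)}) c (f i) (c s(u, f (i+1)))

open Classical in
/-- the rotated colouring: fan edges `s(u, f i)` for `i < t` take the colour of the
next fan edge -/
noncomputable def rot (c : Sym2 V → Fin n) (u : V) (f : ℕ → V) (t : ℕ) (e : Sym2 V) : Fin n :=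
  if h : ∃ i, i < t ∧ e = s(u, f i) then c s(u, f (Classical.choose h + 1)) else c e

variable (hF : IsFan G u v c m f) (huv : G.Adj u v)
  (hprop : Proper (G.deleteEdges {s(u,v)}) c)

include hF in
lemma fan_ne_u {i : ℕ} (hi : i ≤ m) : f i ≠ u := (hF.hadj i hi).ne'

include hF in
lemma rot_spec₁ {t i : ℕ} (ht : t ≤ m) (hit : i < t) :
    rot c u f t (s(u, f i)) = c s(u, f (i + 1)) := by
  have h : ∃ k, k < t ∧ s(u, f i) = s(u, f k) := ⟨i, hit, rfl⟩
  rw [rot, dif_pos h]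
  obtain ⟨h1, h2⟩ := Classical.choose_spec h
  have : f i = f (Classical.choose h) := Sym2.congr_right.mp h2
  have : i = Classical.choose h :=
    hF.hinj i (le_trans (le_of_lt hit) ht) _ (le_trans (le_of_lt h1) ht) this
  rw [← this]

lemma rot_spec₂ {t : ℕ} {e : Sym2 V} (he : ∀ i < t, e ≠ s(u, f i)) :
    rot c u f t e = c e := by
  rw [rot, dif_neg]
  rintro ⟨i, hit, rfl⟩
  exact he i hit rfl

include hF in
lemma fan_edge_mem {i : ℕ} (hi : i ≤ m) (h1 : 1 ≤ i) :
    s(u, f i) ∈ (G.deleteEdges {s(u,v)}).edgeSet := by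
  rw [H0_edge_iff]
  refine ⟨(SimpleGraph.mem_edgeSet G).mpr (hF.hadj i hi), ?_⟩
  intro hh
  have : f i = v := Sym2.congr_right.mp hh
  rw [← hF.hv] at this
  have := hF.hinj i hi 0 (Nat.zero_le m) this
  omega

include hprop in
lemma c_inj_at_u {e e' : Sym2 V} (he : e ∈ (G.deleteEdges {s(u,v)}).edgeSet)
    (he' : e' ∈ (G.deleteEdges {s(u,v)}).edgeSet) (hue : u ∈ e) (hue' : u ∈ e')
    (hne : e ≠ e') : c e ≠ c e' :=
  hprop e he e' he' hne ⟨u, hue, hue'⟩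

include hF in
/-- an edge of `G − s(u, f t)` that is not a fan edge is an edge of `G − uv` -/
lemma nonfan_mem {t : ℕ} (ht : t ≤ m) {e : Sym2 V}
    (he : e ∈ (G.deleteEdges {s(u, f t)}).edgeSet)
    (hnf : ∀ i < t, e ≠ s(u, f i)) : e ∈ (G.deleteEdges {s(u,v)}).edgeSet := by
  rw [H0_edge_iff] at he ⊢
  refine ⟨he.1, ?_⟩
  rcases Nat.eq_zero_or_pos t with rfl | hpos
  · rw [← hF.hv]; exact he.2
  · rw [← hF.hv]; exact hnf 0 hpos

include hF hprop in
lemma rot_proper {t : ℕ} (ht : t ≤ m) :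
    Proper (G.deleteEdges {s(u, f t)}) (rot c u f t) := by
  have hH0 : ∀ i, 1 ≤ i → i ≤ m → s(u, f i) ∈ (G.deleteEdges {s(u,v)}).edgeSet := by
    intro i h1 h2
    have hne : s(u, f i) ≠ s(u,v) := by
      intro hh
      have : f i = v := Sym2.congr_right.mp hh
      rw [← hF.hv] at this
      have := hF.hinj i h2 0 (Nat.zero_le m) this
      omega
    rw [H0_edge_iff]
    exact ⟨(SimpleGraph.mem_edgeSet G).mpr (hF.hadj i h2), hne⟩
  have mixed : ∀ (e e' : Sym2 V),
      e ∈ (G.deleteEdges {s(u, f t)}).edgeSet → e' ∈ (G.deleteEdges {s(u, f t)}).edgeSet →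
      (∃ i, i < t ∧ e = s(u, f i)) → (∀ i < t, e' ≠ s(u, f i)) → e ≠ e' →
      (∃ x, x ∈ e ∧ x ∈ e') → rot c u f t e ≠ rot c u f t e' := by
    rintro e e' he he' ⟨i, hit, rfl⟩ hnf hne ⟨x, hxe, hxe'⟩
    rw [rot_spec₁ hF ht hit, rot_spec₂ hnf]
    have he'0 := nonfan_mem hF ht he' hnf
    rcases Sym2.mem_iff.mp hxe with rfl | rfl
    · -- shared vertex is u
      refine c_inj_at_u hprop (hH0 (i+1) (by omega) (by omega)) he'0
        (Sym2.mem_iff.mpr (Or.inl rfl)) hxe' ?_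
      intro hh
      rcases Nat.lt_or_ge (i+1) t with h1 | h1
      · exact hnf (i+1) h1 hh.symm
      · have : i + 1 = t := by omega
        rw [H0_edge_iff] at he'
        exact he'.2 (by rw [← hh, this])
    · -- shared vertex is f i
      intro hh
      exact hF.hfree i (lt_of_lt_of_le hit ht) e' he'0 hxe' hh.symm
  intro e he e' he' hne hsh
  by_cases hfe : ∃ i, i < t ∧ e = s(u, f i) <;>
    by_cases hfe' : ∃ i, i < t ∧ e' = s(u, f i)
  · obtain ⟨i, hit, rfl⟩ := hfe
    obtain ⟨i', hit', rfl⟩ := hfe'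
    rw [rot_spec₁ hF ht hit, rot_spec₁ hF ht hit']
    have hii : i ≠ i' := fun hh => hne (by rw [hh])
    refine c_inj_at_u hprop (hH0 (i+1) (by omega) (by omega)) (hH0 (i'+1) (by omega) (by omega))
      (Sym2.mem_iff.mpr (Or.inl rfl)) (Sym2.mem_iff.mpr (Or.inl rfl)) ?_
    intro hh
    have : f (i+1) = f (i'+1) := Sym2.congr_right.mp hh
    have := hF.hinj (i+1) (by omega) (i'+1) (by omega) this
    omega
  · push_neg at hfe'
    exact mixed e e' he he' hfe hfe' hne hsh
  · push_neg at hfe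
    obtain ⟨x, hx, hx'⟩ := hsh
    exact (mixed e' e he' he hfe' hfe (Ne.symm hne) ⟨x, hx', hx⟩).symm
  · push_neg at hfe; push_neg at hfe'
    rw [rot_spec₂ hfe, rot_spec₂ hfe']
    exact hprop e (nonfan_mem hF ht he hfe) e' (nonfan_mem hF ht he' hfe') hne hsh

include hF in
lemma rot_missing_u {t : ℕ} (ht : t ≤ m) {γ : Fin n}
    (hγ : Missing (G.deleteEdges {s(u,v)}) c u γ) :
    Missing (G.deleteEdges {s(u, f t)}) (rot c u f t) u γ := by
  intro e he hue
  by_cases hfe : ∃ i, i < t ∧ e = s(u, f i)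
  · obtain ⟨i, hit, rfl⟩ := hfe
    rw [rot_spec₁ hF ht hit]
    exact hγ _ (fan_edge_mem hF (by omega) (by omega)) (Sym2.mem_iff.mpr (Or.inl rfl))
  · push_neg at hfe
    rw [rot_spec₂ hfe]
    exact hγ e (nonfan_mem hF ht he hfe) hue

include hF in
lemma rot_missing_ft {t : ℕ} (ht : t ≤ m) {γ : Fin n}
    (hγ : Missing (G.deleteEdges {s(u,v)}) c (f t) γ) :
    Missing (G.deleteEdges {s(u, f t)}) (rot c u f t) (f t) γ := by
  intro e he hue
  have hfe : ∀ i < t, e ≠ s(u, f i) := by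
    rintro i hit rfl
    rcases Sym2.mem_iff.mp hue with hh | hh
    · exact fan_ne_u hF ht hh
    · have := hF.hinj t ht i (by omega) hh
      omega
  rw [rot_spec₂ hfe]
  exact hγ e (nonfan_mem hF ht he hfe) hue

include hF hprop in
lemma beta_char_lt {t j : ℕ} (ht : t ≤ m) (hj1 : 1 ≤ j) (hjt : j < t)
    {e : Sym2 V} (he : e ∈ (G.deleteEdges {s(u, f t)}).edgeSet) (hue : u ∈ e) :
    rot c u f t e = c s(u, f j) ↔ e = s(u, f (j-1)) := by
  constructor
  · intro heq
    by_cases hfe : ∃ i, i < t ∧ e = s(u, f i)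
    · obtain ⟨i, hit, rfl⟩ := hfe
      rw [rot_spec₁ hF ht hit] at heq
      by_cases hij : i + 1 = j
      · rw [Sym2.congr_right]
        have : i = j - 1 := by omega
        rw [this]
      · exfalso
        refine c_inj_at_u hprop (fan_edge_mem hF (by omega) (by omega))
          (fan_edge_mem hF (by omega) hj1) (Sym2.mem_iff.mpr (Or.inl rfl))
          (Sym2.mem_iff.mpr (Or.inl rfl)) ?_ heq
        intro hh
        have := hF.hinj (i+1) (by omega) j (by omega) (Sym2.congr_right.mp hh)
        omega
    · push_neg at hfe
      rw [rot_spec₂ hfe] at heq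
      exfalso
      by_cases hee : e = s(u, f j)
      · exact hfe j hjt hee
      · exact c_inj_at_u hprop (nonfan_mem hF ht he hfe)
          (fan_edge_mem hF (by omega) hj1) hue (Sym2.mem_iff.mpr (Or.inl rfl)) hee heq
  · rintro rfl
    rw [rot_spec₁ hF ht (by omega)]
    have : j - 1 + 1 = j := by omega
    rw [this]

include hF hprop in
lemma beta_char_ge {t j : ℕ} (hj1 : 1 ≤ j) (hjm : j ≤ m) (htj : t < j)
    {e : Sym2 V} (he : e ∈ (G.deleteEdges {s(u, f t)}).edgeSet) (hue : u ∈ e) :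
    rot c u f t e = c s(u, f j) ↔ e = s(u, f j) := by
  have ht : t ≤ m := by omega
  constructor
  · intro heq
    by_cases hfe : ∃ i, i < t ∧ e = s(u, f i)
    · obtain ⟨i, hit, rfl⟩ := hfe
      rw [rot_spec₁ hF ht hit] at heq
      exfalso
      refine c_inj_at_u hprop (fan_edge_mem hF (by omega) (by omega))
        (fan_edge_mem hF hjm hj1) (Sym2.mem_iff.mpr (Or.inl rfl))
        (Sym2.mem_iff.mpr (Or.inl rfl)) ?_ heq
      intro hh
      have := hF.hinj (i+1) (by omega) j hjm (Sym2.congr_right.mp hh)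
      omega
    · push_neg at hfe
      rw [rot_spec₂ hfe] at heq
      by_cases hee : e = s(u, f j)
      · exact hee
      · exact absurd heq (c_inj_at_u hprop (nonfan_mem hF ht he hfe)
          (fan_edge_mem hF hjm hj1) hue (Sym2.mem_iff.mpr (Or.inl rfl)) hee)
  · rintro rfl
    rw [rot_spec₂ ?_]
    rintro i hit hh
    have := hF.hinj j hjm i (by omega) (Sym2.congr_right.mp hh)
    omega

end Fan

section DgDeg

variable {n : ℕ} {H : SimpleGraph V} {c : Sym2 V → Fin n} {a b : Fin n}

lemma Dg_key (hprop : Proper H c) {z w w' : V} (h : (Dg H c a b).Adj z w)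
    (h' : (Dg H c a b).Adj z w') (hc : c s(z,w) = c s(z,w')) : w = w' := by
  by_contra hne
  refine hprop s(z,w) ((SimpleGraph.mem_edgeSet H).mpr h.1) s(z,w')
    ((SimpleGraph.mem_edgeSet H).mpr h'.1) ?_ ⟨z, Sym2.mem_iff.mpr (Or.inl rfl),
    Sym2.mem_iff.mpr (Or.inl rfl)⟩ hc
  intro hh
  exact hne (Sym2.congr_right.mp hh)

lemma Dg_deg2 (hprop : Proper H c) : Deg2 (Dg H c a b) := by
  intro z w₁ w₂ w₃ h1 h2 h3
  rcases h1.2 with hA | hA <;> rcases h2.2 with hB | hB <;> rcases h3.2 with hC | hC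
  · exact Or.inl (Dg_key hprop h1 h2 (hA.trans hB.symm))
  · exact Or.inl (Dg_key hprop h1 h2 (hA.trans hB.symm))
  · exact Or.inr (Or.inl (Dg_key hprop h1 h3 (hA.trans hC.symm)))
  · exact Or.inr (Or.inr (Dg_key hprop h2 h3 (hB.trans hC.symm)))
  · exact Or.inr (Or.inr (Dg_key hprop h2 h3 (hB.trans hC.symm)))
  · exact Or.inr (Or.inl (Dg_key hprop h1 h3 (hA.trans hC.symm)))
  · exact Or.inl (Dg_key hprop h1 h2 (hA.trans hB.symm))
  · exact Or.inl (Dg_key hprop h1 h2 (hA.trans hB.symm))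

lemma Dg_deg1_missing_a (hprop : Proper H c) {z : V} (hz : Missing H c z a) :
    Deg1 (Dg H c a b) z := by
  intro w₁ w₂ h1 h2
  have k1 : c s(z,w₁) = b := by
    rcases h1.2 with hh | hh
    · exact absurd hh (hz _ ((SimpleGraph.mem_edgeSet H).mpr h1.1) (Sym2.mem_iff.mpr (Or.inl rfl)))
    · exact hh
  have k2 : c s(z,w₂) = b := by
    rcases h2.2 with hh | hh
    · exact absurd hh (hz _ ((SimpleGraph.mem_edgeSet H).mpr h2.1) (Sym2.mem_iff.mpr (Or.inl rfl)))
    · exact hh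
  exact Dg_key hprop h1 h2 (k1.trans k2.symm)

lemma Dg_deg1_missing_b (hprop : Proper H c) {z : V} (hz : Missing H c z b) :
    Deg1 (Dg H c a b) z := by
  intro w₁ w₂ h1 h2
  have k1 : c s(z,w₁) = a := by
    rcases h1.2 with hh | hh
    · exact hh
    · exact absurd hh (hz _ ((SimpleGraph.mem_edgeSet H).mpr h1.1) (Sym2.mem_iff.mpr (Or.inl rfl)))
  have k2 : c s(z,w₂) = a := by
    rcases h2.2 with hh | hh
    · exact hh
    · exact absurd hh (hz _ ((SimpleGraph.mem_edgeSet H).mpr h2.1) (Sym2.mem_iff.mpr (Or.inl rfl)))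
  exact Dg_key hprop h1 h2 (k1.trans k2.symm)

end DgDeg

lemma walk_transfer {D D' : SimpleGraph V} {u : V}
    (hag : ∀ x y, x ≠ u → y ≠ u → D'.Adj x y → D.Adj x y) :
    ∀ {s t : V} (p : D'.Walk s t), u ∉ p.support → D.Reachable s t := by
  intro s t p
  induction p with
  | nil => intro _; exact SimpleGraph.Reachable.refl _
  | @cons x y z h p' ih =>
    intro hu
    rw [SimpleGraph.Walk.support_cons, List.mem_cons] at hu
    push_neg at hu
    have hy : y ≠ u := by
      intro hh
      exact hu.2 (hh ▸ p'.start_mem_support)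
    exact ((hag x y (Ne.symm hu.1) hy h).reachable).trans (ih hu.2)

lemma extend_col [DecidableEq V] {n : ℕ} {G : SimpleGraph V} {u w : V} (hw : G.Adj u w)
    {c' : Sym2 V → Fin n} (hp : Proper (G.deleteEdges {s(u,w)}) c')
    {γ : Fin n} (h1 : Missing (G.deleteEdges {s(u,w)}) c' u γ)
    (h2 : Missing (G.deleteEdges {s(u,w)}) c' w γ) :
    ∃ c'' : Sym2 V → Fin n, Proper G c'' := by
  classical
  refine ⟨Function.update c' s(u,w) γ, ?_⟩
  intro e he f hf hne hsh
  obtain ⟨x, hxe, hxf⟩ := hsh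
  by_cases hee : e = s(u,w) <;> by_cases hff : f = s(u,w)
  · exact absurd (hee.trans hff.symm) hne
  · subst hee
    rw [Function.update_self, Function.update_of_ne hff]
    have hf0 : f ∈ (G.deleteEdges {s(u,w)}).edgeSet := H0_edge_iff.mpr ⟨hf, hff⟩
    rcases Sym2.mem_iff.mp hxe with rfl | rfl
    · exact (h1 f hf0 hxf).symm
    · exact (h2 f hf0 hxf).symm
  · subst hff
    rw [Function.update_self, Function.update_of_ne hee]
    have he0 : e ∈ (G.deleteEdges {s(u,w)}).edgeSet := H0_edge_iff.mpr ⟨he, hee⟩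
    rcases Sym2.mem_iff.mp hxf with rfl | rfl
    · exact h1 e he0 hxe
    · exact h2 e he0 hxe
  · rw [Function.update_of_ne hee, Function.update_of_ne hff]
    exact hp e (H0_edge_iff.mpr ⟨he, hee⟩) f (H0_edge_iff.mpr ⟨hf, hff⟩) hne ⟨x, hxe, hxf⟩

theorem extend_proper [Fintype V] [DecidableEq V] {n Δ : ℕ} (hn : Δ + 1 < n)
    {G : SimpleGraph V} [DecidableRel G.Adj] (hdeg : ∀ x, G.degree x ≤ Δ)
    {u v : V} (huv : G.Adj u v) {c : Sym2 V → Fin n}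
    (hc : Proper (G.deleteEdges {s(u,v)}) c) :
    ∃ c' : Sym2 V → Fin n, Proper G c' := by
  classical
  have hHle : G.deleteEdges {s(u,v)} ≤ G := SimpleGraph.deleteEdges_le _
  -- maximal fan
  have hbound : ∀ (k : ℕ) (f : ℕ → V), IsFan G u v c k f → k + 1 ≤ Fintype.card V := by
    intro k f hf
    have hcard : ((Finset.range (k+1)).image f).card = k + 1 := by
      rw [Finset.card_image_of_injOn, Finset.card_range]
      intro i hi j hj hij
      simp only [Finset.coe_range, Set.mem_Iio] at hi hj
      exact hf.hinj i (by omega) j (by omega) hij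
    calc k + 1 = ((Finset.range (k+1)).image f).card := hcard.symm
    _ ≤ (Finset.univ : Finset V).card := Finset.card_le_univ _
    _ = Fintype.card V := rfl
  have hP0 : ∃ f : ℕ → V, IsFan G u v c 0 f := by
    refine ⟨fun _ => v, rfl, ?_, ?_, ?_⟩
    · intro i hi
      have : i = 0 := by omega
      subst this; exact huv
    · intro i hi j hj _; omega
    · intro i hi; omega
  set m := Nat.findGreatest (fun k => ∃ f : ℕ → V, IsFan G u v c k f) (Fintype.card V) with hm
  obtain ⟨f, hF⟩ : ∃ f : ℕ → V, IsFan G u v c m f := by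
    have hh := Nat.findGreatest_spec (P := fun k => ∃ f : ℕ → V, IsFan G u v c k f)
      (Nat.zero_le (Fintype.card V)) hP0
    rw [hm]
    exact hh
  obtain ⟨β, hβ⟩ := exists_missing (show Δ < n by omega) hHle hdeg c (f m)
  by_cases hβu : Missing (G.deleteEdges {s(u,v)}) c u β
  · exact extend_col (hF.hadj m le_rfl) (rot_proper hF hc le_rfl)
      (rot_missing_u hF le_rfl hβu) (rot_missing_ft hF le_rfl hβ)
  obtain ⟨α, hα⟩ := exists_missing (show Δ < n by omega) hHle hdeg c u
  have hαβ : α ≠ β := fun h => hβu (h ▸ hα)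
  -- the β-edge at u
  have hex : ∃ e ∈ (G.deleteEdges {s(u,v)}).edgeSet, u ∈ e ∧ c e = β := by
    rw [Missing] at hβu; push_neg at hβu
    obtain ⟨e, he, hue, hce⟩ := hβu
    exact ⟨e, he, hue, hce⟩
  obtain ⟨e, he, hue, hce⟩ := hex
  obtain ⟨y, hadjy, rfl⟩ := edge_rep he hue
  have hyv : y ≠ v := by
    intro hh
    exact (H0_edge_iff.mp he).2 (by rw [hh])
  -- y is a fan vertex
  have hyfan : ∃ j, 1 ≤ j ∧ j ≤ m ∧ f j = y := by
    by_contra hno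
    push_neg at hno
    have hyne : ∀ j ≤ m, f j ≠ y := by
      intro j hj
      rcases Nat.eq_zero_or_pos j with rfl | hpos
      · rw [hF.hv]; exact Ne.symm hyv
      · exact hno j hpos hj
    have hg : IsFan G u v c (m+1) (fun i => if i ≤ m then f i else y) := by
      refine ⟨by simp [hF.hv], ?_, ?_, ?_⟩
      · intro i hi
        by_cases h : i ≤ m
        · simpa [h] using hF.hadj i h
        · simpa [h] using hHle hadjy
      · intro i hi j hj hij
        by_cases h1 : i ≤ m <;> by_cases h2 : j ≤ m <;> simp [h1, h2] at hij
        · exact hF.hinj i h1 j h2 hij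
        · exact absurd hij (hyne i h1)
        · exact absurd hij.symm (hyne j h2)
        · omega
      · intro i hi
        by_cases h : i < m
        · have h1 : i ≤ m := by omega
          have h2 : i + 1 ≤ m := by omega
          simpa [h1, h2] using hF.hfree i h
        · have hi' : i = m := by omega
          subst hi'
          have h2 : ¬ (m + 1 ≤ m) := by omega
          have hgoal : Missing (G.deleteEdges {s(u,v)}) c (f m) (c s(u, y)) := by
            rw [hce]; exact hβ
          simpa [h2] using hgoal
    exact Nat.findGreatest_is_greatest (show m < m + 1 by omega)
      (by have := hbound (m+1) _ hg; omega) ⟨_, hg⟩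
  obtain ⟨j, hj1, hjm, hfj⟩ := hyfan
  rw [← hfj] at hadjy hce he
  have hjlt : j < m := by
    rcases Nat.lt_or_ge j m with h | h
    · exact h
    · exfalso
      have hjm' : j = m := by omega
      subst hjm'
      exact hβ _ he (Sym2.mem_iff.mpr (Or.inr rfl)) hce
  have hmissj : Missing (G.deleteEdges {s(u,v)}) c (f (j-1)) β := by
    have hh := hF.hfree (j-1) (by omega)
    rw [show j - 1 + 1 = j by omega, hce] at hh
    exact hh
  by_cases hreach : (Dg (G.deleteEdges {s(u,v)}) c α β).Reachable u (f (j-1))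
  · -- Case B : rotate fully to m, swap the chain there
    have hne_jm : f (j-1) ≠ f m := by
      intro hh
      have := hF.hinj (j-1) (by omega) m le_rfl hh
      omega
    have hfm_nr : ¬ (Dg (G.deleteEdges {s(u,v)}) c α β).Reachable u (f m) := by
      intro hr
      exact hne_jm (unique_pendant (Dg_deg2 hc) (Dg_deg1_missing_a hc hα)
        (Dg_deg1_missing_b hc hmissj) (Dg_deg1_missing_b hc hβ)
        (fan_ne_u hF (by omega)) (fan_ne_u hF le_rfl) hreach hr)
    have hpropm : Proper (G.deleteEdges {s(u, f m)}) (rot c u f m) := rot_proper hF hc le_rfl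
    have hD'u : ∀ z, (Dg (G.deleteEdges {s(u, f m)}) (rot c u f m) α β).Adj u z →
        z = f (j-1) := by
      rintro z ⟨h1, h2⟩
      have hmem : s(u,z) ∈ (G.deleteEdges {s(u, f m)}).edgeSet :=
        (SimpleGraph.mem_edgeSet _).mpr h1
      rcases h2 with h2 | h2
      · exact absurd h2 (rot_missing_u hF le_rfl hα _ hmem (Sym2.mem_iff.mpr (Or.inl rfl)))
      · have := (beta_char_lt hF hc le_rfl hj1 hjlt hmem
          (Sym2.mem_iff.mpr (Or.inl rfl))).mp (by rw [hce]; exact h2)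
        exact Sym2.congr_right.mp this
    have hagree : ∀ x y', x ≠ u → y' ≠ u →
        (Dg (G.deleteEdges {s(u, f m)}) (rot c u f m) α β).Adj x y' →
        (Dg (G.deleteEdges {s(u,v)}) c α β).Adj x y' := by
      rintro x y' hx hy ⟨h1, h2⟩
      have hnu : ∀ w : V, s(x,y') ≠ s(u,w) := by
        intro w hh
        have : u ∈ s(x,y') := hh ▸ Sym2.mem_iff.mpr (Or.inl rfl)
        rcases Sym2.mem_iff.mp this with hh' | hh'
        · exact hx hh'.symm
        · exact hy hh'.symm
      have hG : G.Adj x y' := (SimpleGraph.deleteEdges_adj.mp h1).1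
      have hrw : rot c u f m s(x,y') = c s(x,y') := by
        apply rot_spec₂
        intro i _
        exact hnu (f i)
      refine ⟨SimpleGraph.deleteEdges_adj.mpr ⟨hG, by simp [hnu v]⟩, ?_⟩
      rwa [hrw] at h2
    have hfm_nr' : ¬ (Dg (G.deleteEdges {s(u, f m)}) (rot c u f m) α β).Reachable u (f m) := by
      intro hr
      obtain ⟨p0⟩ := hr
      obtain ⟨pw, hpath⟩ := p0.toPath
      obtain ⟨b', h', pw', rfl⟩ := SimpleGraph.Walk.exists_eq_cons_of_ne
        (Ne.symm (fan_ne_u hF le_rfl)) pw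
      have hb' : b' = f (j-1) := hD'u b' h'
      subst hb'
      have hu_not : u ∉ pw'.support := ((SimpleGraph.Walk.cons_isPath_iff h' pw').mp hpath).2
      exact hfm_nr (hreach.trans (walk_transfer hagree pw' hu_not))
    exact extend_col (hF.hadj m le_rfl) (swap_proper hαβ hpropm)
      (swap_missing_u hαβ hpropm (rot_missing_u hF le_rfl hα))
      (swap_missing_far hfm_nr' (rot_missing_ft hF le_rfl hβ))
  · -- Case A : rotate to j-1, swap the chain there
    have hj1m : j - 1 ≤ m := by omega
    have hpropA : Proper (G.deleteEdges {s(u, f (j-1))}) (rot c u f (j-1)) :=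
      rot_proper hF hc hj1m
    have hDAeq : Dg (G.deleteEdges {s(u, f (j-1))}) (rot c u f (j-1)) α β =
        Dg (G.deleteEdges {s(u,v)}) c α β := by
      have hchar : ∀ z, (Dg (G.deleteEdges {s(u, f (j-1))}) (rot c u f (j-1)) α β).Adj u z ↔
          z = f j := by
        intro z
        constructor
        · rintro ⟨h1, h2⟩
          have hmem : s(u,z) ∈ (G.deleteEdges {s(u, f (j-1))}).edgeSet :=
            (SimpleGraph.mem_edgeSet _).mpr h1
          rcases h2 with h2 | h2
          · exact absurd h2 (rot_missing_u hF hj1m hα _ hmem (Sym2.mem_iff.mpr (Or.inl rfl)))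
          · have := (beta_char_ge hF hc hj1 hjm (by omega) hmem
              (Sym2.mem_iff.mpr (Or.inl rfl))).mp (by rw [hce]; exact h2)
            exact Sym2.congr_right.mp this
        · rintro rfl
          have hmem : s(u, f j) ∈ (G.deleteEdges {s(u, f (j-1))}).edgeSet := by
            rw [H0_edge_iff]
            refine ⟨(SimpleGraph.mem_edgeSet G).mpr (hF.hadj j hjm), ?_⟩
            intro hh
            have := hF.hinj j hjm (j-1) (by omega) (Sym2.congr_right.mp hh)
            omega
          refine ⟨(SimpleGraph.mem_edgeSet _).mp hmem, Or.inr ?_⟩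
          rw [(beta_char_ge hF hc hj1 hjm (by omega) hmem (Sym2.mem_iff.mpr (Or.inl rfl))).mpr rfl]
          exact hce
      have hchar' : ∀ z, (Dg (G.deleteEdges {s(u,v)}) c α β).Adj u z ↔ z = f j := by
        intro z
        constructor
        · rintro ⟨h1, h2⟩
          have hmem : s(u,z) ∈ (G.deleteEdges {s(u,v)}).edgeSet :=
            (SimpleGraph.mem_edgeSet _).mpr h1
          rcases h2 with h2 | h2
          · exact absurd h2 (hα _ hmem (Sym2.mem_iff.mpr (Or.inl rfl)))
          · by_contra hne
            refine c_inj_at_u hc hmem he (Sym2.mem_iff.mpr (Or.inl rfl))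
              (Sym2.mem_iff.mpr (Or.inl rfl)) ?_ (h2.trans hce.symm)
            intro hh
            exact hne (Sym2.congr_right.mp hh)
        · rintro rfl
          exact ⟨(SimpleGraph.mem_edgeSet _).mp he, Or.inr hce⟩
      ext x y'
      show (Dg _ _ α β).Adj x y' ↔ (Dg _ _ α β).Adj x y'
      by_cases hx : x = u
      · subst hx
        rw [hchar y', hchar' y']
      · by_cases hy : y' = u
        · rw [hy, SimpleGraph.adj_comm, SimpleGraph.adj_comm (Dg (G.deleteEdges {s(u,v)}) c α β)]
          rw [hchar x, hchar' x]
        · -- neither endpoint is u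
          have hnu : ∀ w : V, s(x,y') ≠ s(u,w) := by
            intro w hh
            have : u ∈ s(x,y') := hh ▸ Sym2.mem_iff.mpr (Or.inl rfl)
            rcases Sym2.mem_iff.mp this with hh' | hh'
            · exact hx hh'.symm
            · exact hy hh'.symm
          have hrw : rot c u f (j-1) s(x,y') = c s(x,y') := by
            apply rot_spec₂
            intro i _
            exact hnu (f i)
          constructor
          · rintro ⟨h1, h2⟩
            have hG : G.Adj x y' := (SimpleGraph.deleteEdges_adj.mp h1).1
            refine ⟨SimpleGraph.deleteEdges_adj.mpr ⟨hG, by simp [hnu v]⟩, ?_⟩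
            rwa [hrw] at h2
          · rintro ⟨h1, h2⟩
            have hG : G.Adj x y' := (SimpleGraph.deleteEdges_adj.mp h1).1
            refine ⟨SimpleGraph.deleteEdges_adj.mpr ⟨hG, by simp [hnu (f (j-1))]⟩, ?_⟩
            rwa [hrw]
    have hreachA : ¬ (Dg (G.deleteEdges {s(u, f (j-1))}) (rot c u f (j-1)) α β).Reachable
        u (f (j-1)) := by
      rw [hDAeq]; exact hreach
    exact extend_col (hF.hadj (j-1) hj1m) (swap_proper hαβ hpropA)
      (swap_missing_u hαβ hpropA (rot_missing_u hF hj1m hα))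
      (swap_missing_far hreachA (rot_missing_ft hF hj1m hmissj))

lemma degree_mono [Fintype V] {G H : SimpleGraph V} (h : G ≤ H)
    [DecidableRel G.Adj] [DecidableRel H.Adj] (x : V) : G.degree x ≤ H.degree x := by
  apply Finset.card_le_card
  intro w hw
  exact (H.mem_neighborFinset x w).mpr (h ((G.mem_neighborFinset x w).mp hw))

theorem core [Fintype V] [DecidableEq V] {Δ : ℕ} :
    ∀ (k : ℕ) (G : SimpleGraph V) [DecidableRel G.Adj], G.edgeSet.ncard ≤ k →
      (∀ x, G.degree x ≤ Δ) → ∃ c : Sym2 V → Fin (Δ + 2), Proper G c := by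
  intro k
  induction k with
  | zero =>
    intro G inst hcard hdeg
    refine ⟨fun _ => ⟨0, by omega⟩, ?_⟩
    intro e he
    exfalso
    have hfin : G.edgeSet.Finite := Set.toFinite _
    have : G.edgeSet = ∅ := by
      rw [← Set.ncard_eq_zero hfin]
      omega
    rw [this] at he
    exact he
  | succ k ih =>
    intro G inst hcard hdeg
    rcases Set.eq_empty_or_nonempty G.edgeSet with hE | hE
    · refine ⟨fun _ => ⟨0, by omega⟩, ?_⟩
      intro e he
      rw [hE] at he
      exact absurd he (Set.notMem_empty e)
    · obtain ⟨e, he⟩ := hE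
      revert he
      induction e using Sym2.ind with
      | _ u v =>
        intro he
        have huv : G.Adj u v := (SimpleGraph.mem_edgeSet G).mp he
        classical
        haveI instD : DecidableRel (G.deleteEdges {s(u,v)}).Adj := fun x y =>
          decidable_of_iff (G.Adj x y ∧ ¬ s(x,y) = s(u,v))
            (by rw [SimpleGraph.deleteEdges_adj]; simp)
        have hle : G.deleteEdges {s(u,v)} ≤ G := SimpleGraph.deleteEdges_le _
        have hdeg' : ∀ x, (G.deleteEdges {s(u,v)}).degree x ≤ Δ :=
          fun x => le_trans (degree_mono hle x) (hdeg x)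
        have hcard' : (G.deleteEdges {s(u,v)}).edgeSet.ncard ≤ k := by
          have heq : (G.deleteEdges {s(u,v)}).edgeSet = G.edgeSet \ {s(u,v)} :=
            SimpleGraph.edgeSet_deleteEdges _
          have : (G.edgeSet \ {s(u,v)}).ncard < G.edgeSet.ncard :=
            Set.ncard_diff_singleton_lt_of_mem he (Set.toFinite _)
          rw [heq]
          omega
        obtain ⟨c, hc⟩ := ih (G.deleteEdges {s(u,v)}) hcard' hdeg'
        exact extend_proper (by omega) hdeg huv hc

end Viz

/-- An edge-colouring is proper for a simple graph `G` if distinct edges of `G`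
sharing a vertex receive distinct colours. -/
def IsProperEdgeColoring {V : Type*} {n : ℕ} (G : SimpleGraph V)
    (c : Sym2 V → Fin n) : Prop :=
  ∀ e ∈ G.edgeSet, ∀ f ∈ G.edgeSet, e ≠ f → (∃ v, v ∈ e ∧ v ∈ f) → c e ≠ c f

set_option maxHeartbeats 1000000 in
/-- If G₁ ∩ G₂ is Δ-regular (every vertex of positive degree in G₁ ⊓ G₂ has
degree exactly Δ there) and Δ(G₁), Δ(G₂) ≤ Δ, then there is an edge-colouring
of G₁ ∪ G₂ with Δ+2 colours that is proper on G₁ and on G₂,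
i.e. χ'(G₁,G₂) ≤ Δ + 2. -/
theorem stmt_18 {V : Type*} [Fintype V] [DecidableEq V] (Δ : ℕ)
    (G₁ G₂ : SimpleGraph V)
    [DecidableRel G₁.Adj] [DecidableRel G₂.Adj] [DecidableRel (G₁ ⊓ G₂).Adj]
    (hreg : ∀ v : V, 0 < (G₁ ⊓ G₂).degree v → (G₁ ⊓ G₂).degree v = Δ)
    (hd₁ : ∀ v : V, G₁.degree v ≤ Δ) (hd₂ : ∀ v : V, G₂.degree v ≤ Δ) :
    ∃ c : Sym2 V → Fin (Δ + 2),
      IsProperEdgeColoring G₁ c ∧ IsProperEdgeColoring G₂ c := by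
  classical
  -- saturation: an edge of the intersection and an edge of `Gᵢ` cannot share a vertex
  -- unless the latter is also in the intersection
  have key : ∀ (G : SimpleGraph V) (_ : DecidableRel G.Adj), G₁ ⊓ G₂ ≤ G →
      (∀ x, G.degree x ≤ Δ) →
      ∀ x (e : Sym2 V), e ∈ (G₁ ⊓ G₂).edgeSet → x ∈ e →
      ∀ f ∈ G.edgeSet, x ∈ f → f ∈ (G₁ ⊓ G₂).edgeSet := by
    intro G instG hle hdegG x e he hxe f hf hxf
    have hsub : (G₁ ⊓ G₂).neighborFinset x ⊆ G.neighborFinset x := by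
      intro w hw
      exact (G.mem_neighborFinset x w).mpr (hle (((G₁ ⊓ G₂).mem_neighborFinset x w).mp hw))
    have hpos : 0 < (G₁ ⊓ G₂).degree x := by
      obtain ⟨w, hadj, rfl⟩ := Viz.edge_rep he hxe
      rw [← SimpleGraph.card_neighborFinset_eq_degree]
      exact Finset.card_pos.mpr ⟨w, ((G₁ ⊓ G₂).mem_neighborFinset x w).mpr hadj⟩
    have heq : (G₁ ⊓ G₂).neighborFinset x = G.neighborFinset x := by
      apply Finset.eq_of_subset_of_card_le hsub
      rw [SimpleGraph.card_neighborFinset_eq_degree, SimpleGraph.card_neighborFinset_eq_degree,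
        hreg x hpos]
      exact hdegG x
    obtain ⟨w, hadj, rfl⟩ := Viz.edge_rep hf hxf
    have : w ∈ (G₁ ⊓ G₂).neighborFinset x := by
      rw [heq]
      exact (G.mem_neighborFinset x w).mpr hadj
    exact (SimpleGraph.mem_edgeSet _).mpr (((G₁ ⊓ G₂).mem_neighborFinset x w).mp this)
  have hdA : ∀ x, (G₁ ⊓ G₂).degree x ≤ Δ :=
    fun x => le_trans (Viz.degree_mono inf_le_left x) (hd₁ x)
  obtain ⟨cA, hcA⟩ := Viz.core _ (G₁ ⊓ G₂) le_rfl hdA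
  obtain ⟨c₁, hc₁⟩ := Viz.core _ G₁ le_rfl hd₁
  obtain ⟨c₂, hc₂⟩ := Viz.core _ G₂ le_rfl hd₂
  refine ⟨fun e => if e ∈ (G₁ ⊓ G₂).edgeSet then cA e else
    if e ∈ G₁.edgeSet then c₁ e else c₂ e, ?_, ?_⟩
  · intro e he f hf hne hsh
    obtain ⟨x, hxe, hxf⟩ := hsh
    by_cases heA : e ∈ (G₁ ⊓ G₂).edgeSet <;> by_cases hfA : f ∈ (G₁ ⊓ G₂).edgeSet
    · simp only [if_pos heA, if_pos hfA]
      exact hcA e heA f hfA hne ⟨x, hxe, hxf⟩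
    · exact absurd (key G₁ inferInstance inf_le_left hd₁ x e heA hxe f hf hxf) hfA
    · exact absurd (key G₁ inferInstance inf_le_left hd₁ x f hfA hxf e he hxe) heA
    · simp only [if_neg heA, if_neg hfA, if_pos he, if_pos hf]
      exact hc₁ e he f hf hne ⟨x, hxe, hxf⟩
  · intro e he f hf hne hsh
    obtain ⟨x, hxe, hxf⟩ := hsh
    by_cases heA : e ∈ (G₁ ⊓ G₂).edgeSet <;> by_cases hfA : f ∈ (G₁ ⊓ G₂).edgeSet
    · simp only [if_pos heA, if_pos hfA]
      exact hcA e heA f hfA hne ⟨x, hxe, hxf⟩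
    · exact absurd (key G₂ inferInstance inf_le_right hd₂ x e heA hxe f hf hxf) hfA
    · exact absurd (key G₂ inferInstance inf_le_right hd₂ x f hfA hxf e he hxe) heA
    · have he1 : e ∉ G₁.edgeSet := by
        intro hh
        exact heA (by rw [SimpleGraph.edgeSet_inf]; exact ⟨hh, he⟩)
      have hf1 : f ∉ G₁.edgeSet := by
        intro hh
        exact hfA (by rw [SimpleGraph.edgeSet_inf]; exact ⟨hh, hf⟩)
      simp only [if_neg heA, if_neg hfA, if_neg he1, if_neg hf1]
      exact hc₂ e he f hf hne ⟨x, hxe, hxf⟩
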